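/- Let G be a game with at least one Left option and at least one Right option, and let H be a game with H ≥ 0 in normal play. Then for any universe X of games, G:H ≥ G modulo X in misère play; that is, for every game W in X, the misère outcome of G:H + W is greater than or equal to that of G + W in the partial order P,N ≤ L and R ≤ P,N ≤ L, R ≤ P, R ≤ N. -/

import Mathlib

namespace SetTheory

universe u

/-- Pre-games (removed from Mathlib; restored with the Mathlib 2024 definitions). -/
inductive PGame : Type (u + 1)
  | mk : ∀ α β : Type u, (α → PGame) → (β → PGame) → PGame

namespace PGame

def LeftMoves : PGame → Type u
  | mk l _ _ _ => l

def RightMoves : PGame → Type u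
  | mk _ r _ _ => r

def moveLeft : ∀ g : PGame, LeftMoves g → PGame
  | mk _ _ L _ => L

def moveRight : ∀ g : PGame, RightMoves g → PGame
  | mk _ _ _ R => R

inductive IsOption : PGame → PGame → Prop
  | moveLeft {x : PGame} (i : x.LeftMoves) : IsOption (x.moveLeft i) x
  | moveRight {x : PGame} (i : x.RightMoves) : IsOption (x.moveRight i) x

def Subsequent : PGame → PGame → Prop :=
  Relation.TransGen IsOption

instance : Zero PGame :=
  ⟨⟨PEmpty, PEmpty, PEmpty.elim, PEmpty.elim⟩⟩

def star : PGame.{u} :=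
  ⟨PUnit, PUnit, fun _ => 0, fun _ => 0⟩

def neg : PGame → PGame
  | ⟨l, r, L, R⟩ => ⟨r, l, fun i => neg (R i), fun i => neg (L i)⟩

instance : Neg PGame :=
  ⟨neg⟩

def addAux (xl xr : Type u) (fL : xl → PGame → PGame) (fR : xr → PGame → PGame) :
    PGame → PGame
  | mk yl yr yL yR =>
    mk (xl ⊕ yl) (xr ⊕ yr)
      (Sum.elim (fun i => fL i (mk yl yr yL yR)) (fun j => addAux xl xr fL fR (yL j)))
      (Sum.elim (fun i => fR i (mk yl yr yL yR)) (fun j => addAux xl xr fL fR (yR j)))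

def add : PGame → PGame → PGame
  | mk xl xr xL xR => addAux xl xr (fun i => add (xL i)) (fun i => add (xR i))

instance : Add PGame :=
  ⟨add⟩

/-- The pair (`x ≤ y`, `x ⧏ y`), defined by recursion on `x` and then `y`. -/
noncomputable def leLf (x : PGame) : PGame → Prop × Prop :=
  PGame.rec (motive := fun _ => PGame → Prop × Prop)
    (fun xl xr xL xR IHxl IHxr y =>
      PGame.rec (motive := fun _ => Prop × Prop)
        (fun yl yr yL yR IHyl IHyr =>
          ((∀ i, (IHxl i (mk yl yr yL yR)).2) ∧ (∀ j, (IHyr j).2),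
           (∃ i, (IHyl i).1) ∨ (∃ j, (IHxr j (mk yl yr yL yR)).1))) y) x

noncomputable instance : LE PGame :=
  ⟨fun x y => (leLf x y).1⟩

end PGame

end SetTheory

open SetTheory

namespace Sprigs

/-- Partizan games (in the lowest universe). -/
abbrev PG : Type 1 := PGame.{0}

/-- Winning predicates moving first under misère play:
`(mw G).1` = Left wins moving first; `(mw G).2` = Right wins moving first. -/
def mw : PG → Prop × Prop
  | PGame.mk α β L R =>
    ((IsEmpty α ∨ ∃ i, ¬ (mw (L i)).2), (IsEmpty β ∨ ∃ j, ¬ (mw (R j)).1))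

/-- Winning predicates moving first under normal play. -/
def nw : PG → Prop × Prop
  | PGame.mk _ _ L R => ((∃ i, ¬ (nw (L i)).2), (∃ j, ¬ (nw (R j)).1))

/-- Outcome classes. -/
inductive Outcome : Type
  | L | R | N | P
deriving DecidableEq

/-- The outcome determined by "Left wins moving first" and "Right wins moving first". -/
noncomputable def outcomeOf (wl wr : Prop) : Outcome :=
  haveI := Classical.propDecidable wl
  haveI := Classical.propDecidable wr
  if wl then (if wr then .N else .L) else (if wr then .R else .P)

/-- Misère-play outcome. -/
noncomputable def mo (G : PG) : Outcome := outcomeOf (mw G).1 (mw G).2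

/-- Normal-play outcome. -/
noncomputable def no (G : PG) : Outcome := outcomeOf (nw G).1 (nw G).2

/-- Partial order on outcomes: R < P < L and R < N < L, with P, N incomparable. -/
def Outcome.le : Outcome → Outcome → Prop
  | .R, _ => True
  | _, .L => True
  | a, b => a = b

def Outcome.lt (a b : Outcome) : Prop := Outcome.le a b ∧ a ≠ b

/-- Dicot games: every subposition has moves for both players or neither. -/
def Dicot : PG → Prop
  | PGame.mk α β L R =>
    ((IsEmpty α ∧ IsEmpty β) ∨ (Nonempty α ∧ Nonempty β)) ∧
      (∀ i, Dicot (L i)) ∧ (∀ j, Dicot (R j))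

/-- Ordinal sum `G : H`. -/
def ordSum (G : PG) : PG → PGame
  | PGame.mk α β L R =>
    PGame.mk (G.LeftMoves ⊕ α) (G.RightMoves ⊕ β)
      (Sum.elim G.moveLeft (fun a => ordSum G (L a)))
      (Sum.elim G.moveRight (fun b => ordSum G (R b)))

/-- Canonical form of a natural number as a game. -/
def natGame : ℕ → PGame
  | 0 => PGame.mk PEmpty PEmpty PEmpty.elim PEmpty.elim
  | n + 1 => PGame.mk PUnit PEmpty (fun _ => natGame n) PEmpty.elim

/-- Canonical form of an integer as a game. -/
def intGame (m : ℤ) : PG := if 0 ≤ m then natGame m.toNat else -natGame (-m).toNat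

/-- Canonical form of the dyadic rational `m / 2 ^ n` as a game. -/
def dGame : ℕ → ℤ → PGame
  | 0, m => intGame m
  | n + 1, m =>
    if m % 2 = 0 then dGame n (m / 2)
    else PGame.mk PUnit PUnit (fun _ => dGame n ((m - 1) / 2)) (fun _ => dGame n ((m + 1) / 2))

/-- A rational number is dyadic if its denominator is a power of two. -/
def IsDyadic (q : ℚ) : Prop := ∃ n : ℕ, q.den = 2 ^ n

/-- The canonical-form game of a dyadic rational. -/
def qGame (q : ℚ) : PG := dGame (Nat.log 2 q.den) q.num

/-- The Sprig `* : x` for a dyadic rational `x`. -/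
def sprig (q : ℚ) : PG := ordSum PGame.star (qGame q)

/-- The Sprig `* : x̄` where `x̄` is the conjugate of the dyadic rational `x`. -/
def sprigNeg (q : ℚ) : PG := ordSum PGame.star (-qGame q)

/-- Disjunctive sum of a list of games. -/
def listSum (l : List PG) : PG := l.foldr (· + ·) 0

/-- The position `(X, Y) = Σ_{x ∈ X} *:x + Σ_{y ∈ Y} *:(-y)`. -/
def sprigsGame (X Y : List ℚ) : PG := listSum (X.map sprig ++ Y.map sprigNeg)

/-- The minimum of a nonempty multiset of rationals (0 for the empty multiset). -/
noncomputable def mmin (s : Multiset ℚ) : ℚ :=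
  if h : s = 0 then 0 else
    s.toFinset.min' (by rwa [Multiset.toFinset_nonempty])

/-- The edge `ε` computed from the reduced multisets `X' = X \ Y` and `Y' = Y \ X`. -/
noncomputable def edge (X Y : Multiset ℚ) : ℚ :=
  if X - Y = 0 ∨ Y - X = 0 then 0 else mmin (X - Y) - mmin (Y - X)

/-- The universe `S` of finite sums of Sprigs (and `*`). -/
inductive InS : PG → Prop
  | star : InS PGame.star
  | sprig {q : ℚ} (h : IsDyadic q) : InS (sprig q)
  | sprigNeg {q : ℚ} (h : IsDyadic q) : InS (sprigNeg q)
  | add {a b : PG} : InS a → InS b → InS (a + b)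

/-- A universe: a set of games closed under disjunctive sum and followers. -/
def IsUniverse (S : Set PG) : Prop :=
  (∀ a ∈ S, ∀ b ∈ S, a + b ∈ S) ∧ ∀ a ∈ S, ∀ b, PGame.Subsequent b a → b ∈ S

theorem PGame.leftMoves_add (x y : PGame) : (x + y).LeftMoves = (x.LeftMoves ⊕ y.LeftMoves) := by
  cases x; cases y; rfl
theorem PGame.rightMoves_add (x y : PGame) : (x + y).RightMoves = (x.RightMoves ⊕ y.RightMoves) := by
  cases x; cases y; rfl
def PGame.toLeftMovesAdd {x y : PGame} : x.LeftMoves ⊕ y.LeftMoves ≃ (x + y).LeftMoves :=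
  Equiv.cast (PGame.leftMoves_add x y).symm
def PGame.toRightMovesAdd {x y : PGame} : x.RightMoves ⊕ y.RightMoves ≃ (x + y).RightMoves :=
  Equiv.cast (PGame.rightMoves_add x y).symm
theorem PGame.add_moveLeft_inl {x : PGame} (y : PGame) (i : x.LeftMoves) :
    (x + y).moveLeft (PGame.toLeftMovesAdd (Sum.inl i)) = x.moveLeft i + y := by
  cases x; cases y; rfl
theorem PGame.add_moveLeft_inr (x : PGame) {y : PGame} (i : y.LeftMoves) :
    (x + y).moveLeft (PGame.toLeftMovesAdd (Sum.inr i)) = x + y.moveLeft i := by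
  cases x; cases y; rfl
theorem PGame.add_moveRight_inl {x : PGame} (y : PGame) (i : x.RightMoves) :
    (x + y).moveRight (PGame.toRightMovesAdd (Sum.inl i)) = x.moveRight i + y := by
  cases x; cases y; rfl
theorem PGame.add_moveRight_inr (x : PGame) {y : PGame} (i : y.RightMoves) :
    (x + y).moveRight (PGame.toRightMovesAdd (Sum.inr i)) = x + y.moveRight i := by
  cases x; cases y; rfl
theorem PGame.lf_zero_aux (y : PG) : (PGame.leLf (0 : PG) y).2 ↔ ∃ i, (0 : PG) ≤ y.moveLeft i := by
  cases y with
  | mk yl yr yL yR =>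
    constructor
    · intro h
      rcases h with h | ⟨k, _⟩
      · exact h
      · exact k.elim
    · intro h
      exact Or.inl h
theorem PGame.zero_le_aux (x : PG) : (0 : PG) ≤ x ↔ ∀ j, (PGame.leLf (0 : PG) (x.moveRight j)).2 := by
  cases x
  exact ⟨fun h => h.2, fun h => ⟨fun i => PEmpty.elim i, h⟩⟩
theorem PGame.zero_le {x : PG} : 0 ≤ x ↔ ∀ j, ∃ i, 0 ≤ (x.moveRight j).moveLeft i := by
  rw [PGame.zero_le_aux]
  simp only [PGame.lf_zero_aux]
theorem isOption_wf : WellFounded PGame.IsOption := ⟨fun x => by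
  induction x with
  | mk l r L R IHl IHr =>
    constructor
    intro y h
    cases h with
    | moveLeft i => exact IHl i
    | moveRight i => exact IHr i⟩
instance : WellFoundedRelation PG := ⟨PGame.Subsequent, isOption_wf.transGen⟩

lemma mw_fst (x : PG) : (mw x).1 ↔ (IsEmpty x.LeftMoves ∨ ∃ i, ¬ (mw (x.moveLeft i)).2) := by
  cases x; exact Iff.rfl
lemma mw_snd (x : PG) : (mw x).2 ↔ (IsEmpty x.RightMoves ∨ ∃ j, ¬ (mw (x.moveRight j)).1) := by
  cases x; exact Iff.rfl

lemma mw_add_fst (x y : PG) : (mw (x+y)).1 ↔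
    ((IsEmpty x.LeftMoves ∧ IsEmpty y.LeftMoves) ∨
     (∃ i, ¬(mw (x.moveLeft i + y)).2) ∨ (∃ j, ¬(mw (x + y.moveLeft j)).2)) := by
  rw [mw_fst]
  constructor
  · rintro (h | ⟨k, hk⟩)
    · rw [PGame.leftMoves_add] at h; exact Or.inl (isEmpty_sum.1 h)
    · obtain ⟨k', rfl⟩ := PGame.toLeftMovesAdd.surjective k
      rcases k' with i | j
      · rw [PGame.add_moveLeft_inl] at hk; exact Or.inr (Or.inl ⟨i, hk⟩)
      · rw [PGame.add_moveLeft_inr] at hk; exact Or.inr (Or.inr ⟨j, hk⟩)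
  · rintro (⟨h1, h2⟩ | ⟨i, hi⟩ | ⟨j, hj⟩)
    · left; rw [PGame.leftMoves_add]; exact isEmpty_sum.2 ⟨h1, h2⟩
    · exact Or.inr ⟨PGame.toLeftMovesAdd (Sum.inl i), by rwa [PGame.add_moveLeft_inl]⟩
    · exact Or.inr ⟨PGame.toLeftMovesAdd (Sum.inr j), by rwa [PGame.add_moveLeft_inr]⟩

lemma mw_add_snd (x y : PG) : (mw (x+y)).2 ↔
    ((IsEmpty x.RightMoves ∧ IsEmpty y.RightMoves) ∨
     (∃ i, ¬(mw (x.moveRight i + y)).1) ∨ (∃ j, ¬(mw (x + y.moveRight j)).1)) := by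
  rw [mw_snd]
  constructor
  · rintro (h | ⟨k, hk⟩)
    · rw [PGame.rightMoves_add] at h; exact Or.inl (isEmpty_sum.1 h)
    · obtain ⟨k', rfl⟩ := PGame.toRightMovesAdd.surjective k
      rcases k' with i | j
      · rw [PGame.add_moveRight_inl] at hk; exact Or.inr (Or.inl ⟨i, hk⟩)
      · rw [PGame.add_moveRight_inr] at hk; exact Or.inr (Or.inr ⟨j, hk⟩)
  · rintro (⟨h1, h2⟩ | ⟨i, hi⟩ | ⟨j, hj⟩)
    · left; rw [PGame.rightMoves_add]; exact isEmpty_sum.2 ⟨h1, h2⟩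
    · exact Or.inr ⟨PGame.toRightMovesAdd (Sum.inl i), by rwa [PGame.add_moveRight_inl]⟩
    · exact Or.inr ⟨PGame.toRightMovesAdd (Sum.inr j), by rwa [PGame.add_moveRight_inr]⟩

lemma ordSum_moveLeft_G (G K : PG) (i : G.LeftMoves) :
    ∃ k, (ordSum G K).moveLeft k = G.moveLeft i := by
  cases K; exact ⟨Sum.inl i, rfl⟩
lemma ordSum_moveLeft_H (G K : PG) (a : K.LeftMoves) :
    ∃ k, (ordSum G K).moveLeft k = ordSum G (K.moveLeft a) := by
  cases K; exact ⟨Sum.inr a, rfl⟩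
lemma ordSum_right_cases (G K : PG) (k : (ordSum G K).RightMoves) :
    (∃ i : G.RightMoves, (ordSum G K).moveRight k = G.moveRight i) ∨
    (∃ b : K.RightMoves, (ordSum G K).moveRight k = ordSum G (K.moveRight b)) := by
  cases K
  rcases k with i | b
  exacts [Or.inl ⟨i, rfl⟩, Or.inr ⟨b, rfl⟩]
lemma ordSum_rightMoves_nonempty (G K : PG) (h : Nonempty G.RightMoves) :
    Nonempty (ordSum G K).RightMoves := by
  cases K; exact ⟨Sum.inl h.some⟩

theorem stmt5_key (G : PG) (hGL : Nonempty G.LeftMoves) (hGR : Nonempty G.RightMoves)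
    (H : PG) (hH : 0 ≤ H) (W : PG) :
    ((mw (G + W)).1 → (mw (ordSum G H + W)).1) ∧
    ((mw (ordSum G H + W)).2 → (mw (G + W)).2) := by
  constructor
  · rw [mw_add_fst, mw_add_fst]
    rintro (⟨h1, _⟩ | ⟨i, hi⟩ | ⟨j, hj⟩)
    · exact h1.elim hGL.some
    · obtain ⟨k, hk⟩ := ordSum_moveLeft_G G H i
      exact Or.inr (Or.inl ⟨k, by rw [hk]; exact hi⟩)
    · refine Or.inr (Or.inr ⟨j, fun h2' => hj ?_⟩)
      exact (stmt5_key G hGL hGR H hH (W.moveLeft j)).2 h2'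
  · rw [mw_add_snd, mw_add_snd]
    rintro (⟨h1, _⟩ | ⟨k, hk⟩ | ⟨j, hj⟩)
    · exact h1.elim (ordSum_rightMoves_nonempty G H hGR).some
    · rcases ordSum_right_cases G H k with ⟨i, hi⟩ | ⟨b, hb⟩
      · rw [hi] at hk
        exact Or.inr (Or.inl ⟨i, hk⟩)
      · rw [hb] at hk
        obtain ⟨i, hi⟩ := PGame.zero_le.1 hH b
        have h2 : (mw (ordSum G ((H.moveRight b).moveLeft i) + W)).2 := by
          by_contra hc
          apply hk
          rw [mw_add_fst]
          obtain ⟨k', hk'⟩ := ordSum_moveLeft_H G (H.moveRight b) i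
          exact Or.inr (Or.inl ⟨k', by rw [hk']; exact hc⟩)
        exact (mw_add_snd _ _).1 ((stmt5_key G hGL hGR _ hi W).2 h2)
    · refine Or.inr (Or.inr ⟨j, fun h1' => hj ?_⟩)
      exact (stmt5_key G hGL hGR H hH (W.moveRight j)).1 h1'
termination_by (H, W)
decreasing_by
  · exact Prod.Lex.right _ (Relation.TransGen.single (PGame.IsOption.moveLeft j))
  · exact Prod.Lex.left _ _ (Relation.TransGen.tail (Relation.TransGen.single (PGame.IsOption.moveLeft i)) (PGame.IsOption.moveRight b))
  · exact Prod.Lex.right _ (Relation.TransGen.single (PGame.IsOption.moveRight j))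

lemma outcome_le_of_imp {a b c d : Prop} (h1 : a → c) (h2 : d → b) :
    Outcome.le (outcomeOf a b) (outcomeOf c d) := by
  unfold outcomeOf
  by_cases ha : a <;> by_cases hb : b <;> by_cases hc : c <;> by_cases hd : d <;>
    simp_all [Outcome.le]

/-- If `G` has Left and Right options and `H ≥ 0` in normal play, then
`G:H ≥ G` modulo any universe `𝒳` in misère play. -/
theorem stmt5 (G H : PG) (hGL : Nonempty G.LeftMoves) (hGR : Nonempty G.RightMoves)
    (hH : 0 ≤ H) (𝒳 : Set PG) :
    ∀ W ∈ 𝒳, Outcome.le (mo (G + W)) (mo (ordSum G H + W)) := by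
  intro W _
  have h := stmt5_key G hGL hGR H hH W
  exact outcome_le_of_imp h.1 h.2

end Sprigs
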